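/- arXiv:0910.0284 — 10 statements merged into one kernel-verified Lean document; each statement's English description precedes it below -/
import Mathlib

section
/- For subspaces Z, R, S, T of a finite-dimensional vector space V over a field F, define H(X) = dim X, H(X|Y) = dim(X+Y) - dim Y, and I(X;Y|T) = dim(X+T) + dim(Y+T) - dim(X+Y+T) - dim T. Then H(Z|R) + I(R;S|T) ≥ I(Z;S|T). -/
open Module

noncomputable def condH {F V : Type*} [Field F] [AddCommGroup V] [Module F V]
    (X Y : Submodule F V) : ℤ :=
  (finrank F ↑(X ⊔ Y) : ℤ) - finrank F ↑Y

noncomputable def mutI {F V : Type*} [Field F] [AddCommGroup V] [Module F V]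
    (X Y : Submodule F V) : ℤ :=
  (finrank F ↑X : ℤ) + finrank F ↑Y - finrank F ↑(X ⊔ Y)

noncomputable def condI {F V : Type*} [Field F] [AddCommGroup V] [Module F V]
    (X Y T : Submodule F V) : ℤ :=
  (finrank F ↑(X ⊔ T) : ℤ) + finrank F ↑(Y ⊔ T) - finrank F ↑(X ⊔ Y ⊔ T) - finrank F ↑T

lemma aux_submod {F V : Type*} [Field F] [AddCommGroup V] [Module F V] [FiniteDimensional F V]
    (X Y W J : Submodule F V) (h1 : W ≤ X) (h2 : W ≤ Y) (hJ : X ⊔ Y = J) :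
    (finrank F ↑J : ℤ) + finrank F ↑W ≤ finrank F ↑X + finrank F ↑Y := by
  have h := Submodule.finrank_sup_add_finrank_inf_eq X Y
  have hW : finrank F ↑W ≤ finrank F ↑(X ⊓ Y) :=
    Submodule.finrank_mono (le_inf h1 h2)
  rw [hJ] at h
  omega

theorem stmt0 {F V : Type*} [Field F] [AddCommGroup V] [Module F V] [FiniteDimensional F V]
    (Z R S T : Submodule F V) :
    condH Z R + condI R S T ≥ condI Z S T := by
  unfold condH condI
  have h1 : (finrank F ↑(Z ⊔ R ⊔ S ⊔ T) : ℤ) + finrank F ↑(Z ⊔ T)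
      ≤ finrank F ↑(Z ⊔ S ⊔ T) + finrank F ↑(Z ⊔ R ⊔ T) := by
    refine aux_submod (Z ⊔ S ⊔ T) (Z ⊔ R ⊔ T) (Z ⊔ T) (Z ⊔ R ⊔ S ⊔ T) ?_ ?_ ?_
    · exact sup_le (le_sup_of_le_left le_sup_left) le_sup_right
    · exact sup_le (le_sup_of_le_left le_sup_left) le_sup_right
    · simp only [sup_assoc, sup_comm, sup_left_comm, sup_idem, sup_left_idem]
  have h2 : (finrank F ↑(Z ⊔ R ⊔ T) : ℤ) + finrank F ↑R
      ≤ finrank F ↑(Z ⊔ R) + finrank F ↑(R ⊔ T) := by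
    refine aux_submod (Z ⊔ R) (R ⊔ T) R (Z ⊔ R ⊔ T) le_sup_right le_sup_left ?_
    simp only [sup_assoc, sup_comm, sup_left_comm, sup_idem, sup_left_idem]
  have h3 : (finrank F ↑(R ⊔ S ⊔ T) : ℤ) ≤ finrank F ↑(Z ⊔ R ⊔ S ⊔ T) := by
    exact_mod_cast Submodule.finrank_mono
      (sup_le (sup_le (le_sup_of_le_left (le_sup_of_le_left le_sup_right))
        (le_sup_of_le_left le_sup_right)) le_sup_right)
  linarith
end

section
/- For subspaces Z, R, S, T of a finite-dimensional vector space V, H(Z|R) + I(R;S|T) ≥ I(Z;S|T) + H(Z|R+S+T), where H(X|Y) = dim(X+Y) - dim Y and I(X;Y|T) = dim(X+T) + dim(Y+T) - dim(X+Y+T) - dim T. -/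
open Module

theorem stmt2 {F V : Type*} [Field F] [AddCommGroup V] [Module F V] [FiniteDimensional F V]
    (Z R S T : Submodule F V) :
    condH Z R + condI R S T ≥ condI Z S T + condH Z (R ⊔ S ⊔ T) := by
  unfold condH condI
  have e1 : finrank F ↑((Z ⊔ R) ⊔ (R ⊔ T)) + finrank F ↑((Z ⊔ R) ⊓ (R ⊔ T))
      = finrank F ↑(Z ⊔ R) + finrank F ↑(R ⊔ T) :=
    Submodule.finrank_sup_add_finrank_inf_eq _ _
  have e2 : finrank F ↑((Z ⊔ R ⊔ T) ⊔ (Z ⊔ S ⊔ T)) + finrank F ↑((Z ⊔ R ⊔ T) ⊓ (Z ⊔ S ⊔ T))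
      = finrank F ↑(Z ⊔ R ⊔ T) + finrank F ↑(Z ⊔ S ⊔ T) :=
    Submodule.finrank_sup_add_finrank_inf_eq _ _
  have s1 : (Z ⊔ R) ⊔ (R ⊔ T) = Z ⊔ R ⊔ T := by
    rw [sup_assoc, ← sup_assoc R R T, sup_idem, sup_assoc]
  have s2 : (Z ⊔ R ⊔ T) ⊔ (Z ⊔ S ⊔ T) = Z ⊔ (R ⊔ S ⊔ T) := by
    simp only [sup_assoc, sup_comm, sup_left_comm, sup_idem, ← sup_assoc Z Z, sup_idem]
  have m1 : finrank F ↑R ≤ finrank F ↑((Z ⊔ R) ⊓ (R ⊔ T)) :=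
    Submodule.finrank_mono (le_inf le_sup_right le_sup_left)
  have m2 : finrank F ↑(Z ⊔ T) ≤ finrank F ↑((Z ⊔ R ⊔ T) ⊓ (Z ⊔ S ⊔ T)) :=
    Submodule.finrank_mono (le_inf
      (sup_le (le_sup_of_le_left le_sup_left) le_sup_right)
      (sup_le (le_sup_of_le_left le_sup_left) le_sup_right))
  rw [s1] at e1
  rw [s2] at e2
  
  linarith
end

section
/- For subspaces Z, R, S, T of a finite-dimensional vector space V, H(Z|R) + H(Z|S) + I(R;S|T) ≥ H(Z|T) + H(Z|R+S+T), where H(X|Y) = dim(X+Y) - dim Y and I(X;Y|T) = dim(X+T) + dim(Y+T) - dim(X+Y+T) - dim T. -/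
open Module

set_option maxHeartbeats 1000000 in
theorem stmt3 {F V : Type*} [Field F] [AddCommGroup V] [Module F V] [FiniteDimensional F V]
    (Z R S T : Submodule F V) :
    condH Z R + condH Z S + condI R S T ≥ condH Z T + condH Z (R ⊔ S ⊔ T) := by
  have key : ∀ A B C : Submodule F V, C ≤ A → C ≤ B →
      finrank F ↑(A ⊔ B) + finrank F ↑C ≤ finrank F ↑A + finrank F ↑B := by
    intro A B C hA hB
    rw [← Submodule.finrank_sup_add_finrank_inf_eq A B]
    exact add_le_add le_rfl (Submodule.finrank_mono (le_inf hA hB))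
  have h1 := key (Z ⊔ R) (R ⊔ T) R le_sup_right le_sup_left
  have h2 := key (Z ⊔ S) (S ⊔ T) S le_sup_right le_sup_left
  have h3 := key (Z ⊔ R ⊔ T) (Z ⊔ S ⊔ T) (Z ⊔ T)
    (sup_le_sup_right (le_sup_left : Z ≤ Z ⊔ R) T)
    (sup_le_sup_right (le_sup_left : Z ≤ Z ⊔ S) T)
  have e1 : (Z ⊔ R) ⊔ (R ⊔ T) = Z ⊔ R ⊔ T := by
    rw [sup_assoc Z R (R ⊔ T), ← sup_assoc R R T, sup_idem, ← sup_assoc]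
  have e2 : (Z ⊔ S) ⊔ (S ⊔ T) = Z ⊔ S ⊔ T := by
    rw [sup_assoc Z S (S ⊔ T), ← sup_assoc S S T, sup_idem, ← sup_assoc]
  have e3 : (Z ⊔ R ⊔ T) ⊔ (Z ⊔ S ⊔ T) = Z ⊔ (R ⊔ S ⊔ T) := by
    rw [sup_sup_sup_comm (Z ⊔ R) T (Z ⊔ S) T, sup_idem,
      sup_sup_sup_comm Z R Z S, sup_idem, sup_assoc Z (R ⊔ S) T]
  rw [e1] at h1
  rw [e2] at h2
  rw [e3] at h3
  simp only [condH, condI, ge_iff_le]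
  omega
end

section
/- (Ingleton inequality for subspaces) For subspaces A, B, C, D of a finite-dimensional vector space V, I(A;B) ≤ I(A;B|C) + I(A;B|D) + I(C;D), where I(X;Y) = dim X + dim Y - dim(X+Y) and I(X;Y|T) = dim(X+T) + dim(Y+T) - dim(X+Y+T) - dim T. -/
open Module

theorem stmt5 {F V : Type*} [Field F] [AddCommGroup V] [Module F V] [FiniteDimensional F V]
    (A B C D : Submodule F V) :
    mutI A B ≤ condI A B C + condI A B D + mutI C D := by
  have mod : ∀ X Y : Submodule F V,
      finrank F ↑(X ⊔ Y) + finrank F ↑(X ⊓ Y) = finrank F ↑X + finrank F ↑Y :=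
    fun X Y => Submodule.finrank_sup_add_finrank_inf_eq X Y
  have mono : ∀ X Y : Submodule F V, X ≤ Y → finrank F ↑X ≤ finrank F ↑Y :=
    fun X Y h => Submodule.finrank_mono h
  have hAB : finrank F ↑A + finrank F ↑B = finrank F ↑(A ⊔ B) + finrank F ↑(A ⊓ B) :=
    (mod A B).symm
  -- claim 1 with C
  have e1 : (A ⊔ C) ⊔ (B ⊔ C) = A ⊔ B ⊔ C := by
    rw [sup_sup_sup_comm, sup_idem]
  have h1 : finrank F ↑(A ⊔ B ⊔ C) + finrank F ↑((A ⊔ C) ⊓ (B ⊔ C))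
      = finrank F ↑(A ⊔ C) + finrank F ↑(B ⊔ C) := by
    rw [← e1]; exact mod _ _
  have h1' : finrank F ↑((A ⊓ B) ⊔ C) ≤ finrank F ↑((A ⊔ C) ⊓ (B ⊔ C)) :=
    mono _ _ (sup_le (le_inf (inf_le_left.trans le_sup_left)
      (inf_le_right.trans le_sup_left)) (le_inf le_sup_right le_sup_right))
  -- claim 1 with D
  have e2 : (A ⊔ D) ⊔ (B ⊔ D) = A ⊔ B ⊔ D := by
    rw [sup_sup_sup_comm, sup_idem]
  have h2 : finrank F ↑(A ⊔ B ⊔ D) + finrank F ↑((A ⊔ D) ⊓ (B ⊔ D))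
      = finrank F ↑(A ⊔ D) + finrank F ↑(B ⊔ D) := by
    rw [← e2]; exact mod _ _
  have h2' : finrank F ↑((A ⊓ B) ⊔ D) ≤ finrank F ↑((A ⊔ D) ⊓ (B ⊔ D)) :=
    mono _ _ (sup_le (le_inf (inf_le_left.trans le_sup_left)
      (inf_le_right.trans le_sup_left)) (le_inf le_sup_right le_sup_right))
  -- claim 2
  have h3 : finrank F ↑(((A ⊓ B) ⊔ C) ⊔ ((A ⊓ B) ⊔ D))
      + finrank F ↑(((A ⊓ B) ⊔ C) ⊓ ((A ⊓ B) ⊔ D))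
      = finrank F ↑((A ⊓ B) ⊔ C) + finrank F ↑((A ⊓ B) ⊔ D) := mod _ _
  have h3a : finrank F ↑(C ⊔ D) ≤ finrank F ↑(((A ⊓ B) ⊔ C) ⊔ ((A ⊓ B) ⊔ D)) :=
    mono _ _ (sup_le (le_sup_right.trans le_sup_left) (le_sup_right.trans le_sup_right))
  have h3b : finrank F ↑(A ⊓ B) ≤ finrank F ↑(((A ⊓ B) ⊔ C) ⊓ ((A ⊓ B) ⊔ D)) :=
    mono _ _ (le_inf le_sup_left le_sup_left)
  simp only [mutI, condI]

  omega
end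

section
/- For subspaces A, B, C, D, E of a finite-dimensional vector space V, I(A;B) ≤ I(A;B|C) + I(A;B|D) + I(C;D|E) + I(A;E), where I(X;Y) = dim X + dim Y - dim(X+Y) and I(X;Y|T) = dim(X+T) + dim(Y+T) - dim(X+Y+T) - dim T. -/
open Module

section Aux

variable {F V : Type*} [Field F] [AddCommGroup V] [Module F V] [FiniteDimensional F V]

lemma mutI_eq_inf (X Y : Submodule F V) :
    mutI X Y = (finrank F ↑(X ⊓ Y) : ℤ) := by
  have h := Submodule.finrank_sup_add_finrank_inf_eq X Y
  unfold mutI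
  omega

lemma condI_ge (X Y T Z : Submodule F V) (hX : Z ≤ X) (hY : Z ≤ Y) :
    (finrank F ↑Z : ℤ) - finrank F ↑(Z ⊓ T) ≤ condI X Y T := by
  have h1 := Submodule.finrank_sup_add_finrank_inf_eq (X ⊔ T) (Y ⊔ T)
  have h2 := Submodule.finrank_sup_add_finrank_inf_eq Z T
  have hsup : (X ⊔ T) ⊔ (Y ⊔ T) = X ⊔ Y ⊔ T := by
    rw [sup_assoc, sup_comm T (Y ⊔ T), sup_assoc, sup_idem, ← sup_assoc]
  rw [hsup] at h1
  have hle : Z ⊔ T ≤ (X ⊔ T) ⊓ (Y ⊔ T) :=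
    le_inf (sup_le_sup_right hX T) (sup_le_sup_right hY T)
  have h3 : finrank F ↑(Z ⊔ T) ≤ finrank F ↑((X ⊔ T) ⊓ (Y ⊔ T)) :=
    Submodule.finrank_mono hle
  unfold condI
  omega

end Aux

theorem stmt6 {F V : Type*} [Field F] [AddCommGroup V] [Module F V] [FiniteDimensional F V]
    (A B C D E : Submodule F V) :
    mutI A B ≤ condI A B C + condI A B D + condI C D E + mutI A E := by
  set W := A ⊓ B with hW
  set Y := W ⊓ C ⊓ D with hY
  have hAB : mutI A B = (finrank F ↑W : ℤ) := mutI_eq_inf A B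
  have hAE : mutI A E = (finrank F ↑(A ⊓ E) : ℤ) := mutI_eq_inf A E
  have h1 : (finrank F ↑W : ℤ) - finrank F ↑(W ⊓ C) ≤ condI A B C :=
    condI_ge A B C W inf_le_left inf_le_right
  have h2 : (finrank F ↑W : ℤ) - finrank F ↑(W ⊓ D) ≤ condI A B D :=
    condI_ge A B D W inf_le_left inf_le_right
  have h3 : (finrank F ↑Y : ℤ) - finrank F ↑(Y ⊓ E) ≤ condI C D E :=
    condI_ge C D E Y (le_trans inf_le_left inf_le_right) inf_le_right
  have h4 : finrank F ↑(Y ⊓ E) ≤ finrank F ↑(A ⊓ E) := by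
    apply Submodule.finrank_mono
    exact inf_le_inf_right E (le_trans inf_le_left (le_trans inf_le_left inf_le_left))
  -- submodularity: dim(W⊓C) + dim(W⊓D) ≤ dim W + dim Y
  have h5 : finrank F ↑(W ⊓ C) + finrank F ↑(W ⊓ D) ≤ finrank F ↑W + finrank F ↑Y := by
    have hs := Submodule.finrank_sup_add_finrank_inf_eq (W ⊓ C) (W ⊓ D)
    have hsup : finrank F ↑((W ⊓ C) ⊔ (W ⊓ D)) ≤ finrank F ↑W :=
      Submodule.finrank_mono (sup_le inf_le_left inf_le_left)
    have hinf : (W ⊓ C) ⊓ (W ⊓ D) = Y := by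
      rw [hY]
      ext x
      simp only [Submodule.mem_inf]
      tauto
    rw [hinf] at hs
    omega
  omega
end

section
/- For subspaces A, B, C, D, E of a finite-dimensional vector space V, I(A;B) ≤ I(A;B|C) + I(A;C|D) + I(A;D|E) + I(B;E), where I(X;Y) = dim X + dim Y - dim(X+Y) and I(X;Y|T) = dim(X+T) + dim(Y+T) - dim(X+Y+T) - dim T. -/
open Module

private lemma condI_key {F V : Type*} [Field F] [AddCommGroup V] [Module F V]
    [FiniteDimensional F V] (X Y T W : Submodule F V) (hX : W ≤ X) (hY : W ≤ Y) :
    (finrank F ↑W : ℤ) - finrank F ↑(W ⊓ T) ≤ condI X Y T := by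
  have h1 := Submodule.finrank_sup_add_finrank_inf_eq (X ⊔ T) (Y ⊔ T)
  have h2 := Submodule.finrank_sup_add_finrank_inf_eq W T
  have h3 : (X ⊔ T) ⊔ (Y ⊔ T) = X ⊔ Y ⊔ T := by
    rw [sup_sup_sup_comm, sup_idem]
  rw [h3] at h1
  have h4 : W ⊔ T ≤ (X ⊔ T) ⊓ (Y ⊔ T) :=
    le_inf (sup_le_sup_right hX T) (sup_le_sup_right hY T)
  have h5 : finrank F ↑(W ⊔ T) ≤ finrank F ↑((X ⊔ T) ⊓ (Y ⊔ T)) :=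
    Submodule.finrank_mono h4
  unfold condI
  omega

theorem stmt7 {F V : Type*} [Field F] [AddCommGroup V] [Module F V] [FiniteDimensional F V]
    (A B C D E : Submodule F V) :
    mutI A B ≤ condI A B C + condI A C D + condI A D E + mutI B E := by
  have e1 := condI_key A B C (A ⊓ B) inf_le_left inf_le_right
  have e2 := condI_key A C D (A ⊓ B ⊓ C) (inf_le_left.trans inf_le_left) inf_le_right
  have e3 := condI_key A D E (A ⊓ B ⊓ C ⊓ D) (inf_le_left.trans (inf_le_left.trans inf_le_left))
    inf_le_right
  have hm : mutI A B = (finrank F ↑(A ⊓ B) : ℤ) := by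
    have := Submodule.finrank_sup_add_finrank_inf_eq A B
    unfold mutI; omega
  have hBE : (finrank F ↑(A ⊓ B ⊓ C ⊓ D ⊓ E) : ℤ) ≤ mutI B E := by
    have h := Submodule.finrank_sup_add_finrank_inf_eq B E
    have hle : A ⊓ B ⊓ C ⊓ D ⊓ E ≤ B ⊓ E :=
      le_inf ((inf_le_left.trans (inf_le_left.trans (inf_le_left.trans inf_le_right))))
        inf_le_right
    have := Submodule.finrank_mono (s := A ⊓ B ⊓ C ⊓ D ⊓ E) (t := B ⊓ E) hle
    unfold mutI; omega
  omega
end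

section
/- For subspaces A, B, C, D, E of a finite-dimensional vector space V, 2·I(A;B) ≤ I(A;B|C) + I(A;B|D) + I(A;B|E) + I(C;D) + I(C+D;E), where I(X;Y) = dim X + dim Y - dim(X+Y) and I(X;Y|T) = dim(X+T) + dim(Y+T) - dim(X+Y+T) - dim T. -/
open Module

theorem stmt8 {F V : Type*} [Field F] [AddCommGroup V] [Module F V] [FiniteDimensional F V]
    (A B C D E : Submodule F V) :
    2 * mutI A B ≤ condI A B C + condI A B D + condI A B E + mutI C D + mutI (C ⊔ D) E := by
  set W := A ⊓ B with hW
  have h1 : finrank F ↑(A ⊔ B) + finrank F ↑W = finrank F A + finrank F B :=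
    Submodule.finrank_sup_add_finrank_inf_eq A B
  have key : ∀ T : Submodule F V,
      (finrank F ↑W : ℤ) - finrank F ↑(W ⊓ T) ≤ condI A B T := by
    intro T
    have e1 : finrank F ↑((A ⊔ T) ⊔ (B ⊔ T)) + finrank F ↑((A ⊔ T) ⊓ (B ⊔ T))
        = finrank F ↑(A ⊔ T) + finrank F ↑(B ⊔ T) :=
      Submodule.finrank_sup_add_finrank_inf_eq _ _
    have e2 : (A ⊔ T) ⊔ (B ⊔ T) = A ⊔ B ⊔ T := by
      rw [sup_sup_sup_comm, sup_idem]
    have e3 : W ⊔ T ≤ (A ⊔ T) ⊓ (B ⊔ T) :=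
      le_inf (sup_le_sup_right inf_le_left T) (sup_le_sup_right inf_le_right T)
    have e4 : finrank F ↑(W ⊔ T) + finrank F ↑(W ⊓ T) = finrank F ↑W + finrank F ↑T :=
      Submodule.finrank_sup_add_finrank_inf_eq W T
    have e5 : finrank F ↑(W ⊔ T) ≤ finrank F ↑((A ⊔ T) ⊓ (B ⊔ T)) :=
      Submodule.finrank_mono e3
    rw [e2] at e1
    unfold condI
    push_cast
    omega
  have k1 := key C
  have k2 := key D
  have k3 := key E
  have hC' : finrank F ↑((W ⊓ C) ⊔ (W ⊓ D)) + finrank F ↑((W ⊓ C) ⊓ (W ⊓ D))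
      = finrank F ↑(W ⊓ C) + finrank F ↑(W ⊓ D) :=
    Submodule.finrank_sup_add_finrank_inf_eq _ _
  have hE' : finrank F ↑(((W ⊓ C) ⊔ (W ⊓ D)) ⊔ (W ⊓ E))
        + finrank F ↑(((W ⊓ C) ⊔ (W ⊓ D)) ⊓ (W ⊓ E))
      = finrank F ↑((W ⊓ C) ⊔ (W ⊓ D)) + finrank F ↑(W ⊓ E) :=
    Submodule.finrank_sup_add_finrank_inf_eq _ _
  have m1 : finrank F ↑((W ⊓ C) ⊓ (W ⊓ D)) ≤ finrank F ↑(C ⊓ D) :=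
    Submodule.finrank_mono (inf_le_inf inf_le_right inf_le_right)
  have m2 : finrank F ↑(((W ⊓ C) ⊔ (W ⊓ D)) ⊓ (W ⊓ E)) ≤ finrank F ↑((C ⊔ D) ⊓ E) :=
    Submodule.finrank_mono (inf_le_inf (sup_le_sup inf_le_right inf_le_right) inf_le_right)
  have m3 : finrank F ↑(((W ⊓ C) ⊔ (W ⊓ D)) ⊔ (W ⊓ E)) ≤ finrank F ↑W :=
    Submodule.finrank_mono (sup_le (sup_le inf_le_left inf_le_left) inf_le_left)
  have hCD : finrank F ↑(C ⊔ D) + finrank F ↑(C ⊓ D) = finrank F C + finrank F D :=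
    Submodule.finrank_sup_add_finrank_inf_eq C D
  have hCDE : finrank F ↑((C ⊔ D) ⊔ E) + finrank F ↑((C ⊔ D) ⊓ E)
      = finrank F ↑(C ⊔ D) + finrank F E :=
    Submodule.finrank_sup_add_finrank_inf_eq _ _
  unfold mutI condI at *
  push_cast at *
  omega
end

section
/- (Kinser inequalities for subspaces) For n ≥ 4 and subspaces A₁, ..., Aₙ of a finite-dimensional vector space V, I(A₂;A₃) ≤ I(A₁;A₂) + I(A₃;Aₙ|A₁) + Σ_{i=4}^{n} I(A₂;A_{i-1}|A_i), where I(X;Y) = dim X + dim Y - dim(X+Y) and I(X;Y|T) = dim(X+T) + dim(Y+T) - dim(X+Y+T) - dim T. -/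
open Module

section Aux

variable {F V : Type*} [Field F] [AddCommGroup V] [Module F V] [FiniteDimensional F V]

lemma condI_nonneg (X Y T : Submodule F V) : 0 ≤ condI X Y T := by
  unfold condI
  have h1 : (X ⊔ T) ⊔ (Y ⊔ T) = X ⊔ Y ⊔ T := by
    rw [sup_sup_sup_comm, sup_idem]
  have h2 := Submodule.finrank_sup_add_finrank_inf_eq (X ⊔ T) (Y ⊔ T)
  have h3 : finrank F ↑T ≤ finrank F ↑((X ⊔ T) ⊓ (Y ⊔ T)) :=
    Submodule.finrank_mono (le_inf le_sup_right le_sup_right)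
  rw [h1] at h2
  omega

lemma key_cond {Z X : Submodule F V} (hZX : Z ≤ X) (Y T : Submodule F V) :
    condH Z T - condH Z Y ≤ condI X Y T := by
  have ha := condI_nonneg X Y (Z ⊔ T)
  have hb := condI_nonneg Z T Y
  unfold condI condH at *
  have e1 : X ⊔ (Z ⊔ T) = X ⊔ T := by rw [← sup_assoc, sup_eq_left.mpr hZX]
  have e2 : X ⊔ Y ⊔ (Z ⊔ T) = X ⊔ Y ⊔ T := by
    rw [← sup_assoc, sup_eq_left.mpr (hZX.trans le_sup_left)]
  have e3 : Y ⊔ (Z ⊔ T) = Z ⊔ T ⊔ Y := sup_comm _ _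
  have e4 : T ⊔ Y = Y ⊔ T := sup_comm _ _
  rw [e1, e2, e3] at ha
  rw [e4] at hb
  linarith

lemma key_mut {Z X : Submodule F V} (hZX : Z ≤ X) (Y : Submodule F V) :
    (finrank F ↑Z : ℤ) - condH Z Y ≤ mutI Y X := by
  have ha := condI_nonneg X Y Z
  unfold condI condH mutI at *
  have e1 : X ⊔ Z = X := sup_eq_left.mpr hZX
  have e2 : X ⊔ Y ⊔ Z = Y ⊔ X := by rw [sup_comm X Y, sup_assoc, e1]
  have e3 : Y ⊔ Z = Z ⊔ Y := sup_comm _ _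
  rw [e1, e2, e3] at ha
  linarith

end Aux

theorem stmt11 {F V : Type*} [Field F] [AddCommGroup V] [Module F V] [FiniteDimensional F V]
    (n : ℕ) (hn : 4 ≤ n) (A : ℕ → Submodule F V) :
    mutI (A 2) (A 3) ≤
      mutI (A 1) (A 2) + condI (A 3) (A n) (A 1) +
        ∑ i ∈ Finset.Icc 4 n, condI (A 2) (A (i - 1)) (A i) := by
  set Z : Submodule F V := A 2 ⊓ A 3 with hZdef
  have hZ2 : Z ≤ A 2 := inf_le_left
  have hZ3 : Z ≤ A 3 := inf_le_right
  set f : ℕ → ℤ := fun i => condH Z (A i) with hf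
  -- telescoping sum
  have tel : ∀ m : ℕ, ∑ i ∈ Finset.Icc 4 (m + 4), (f i - f (i - 1)) = f (m + 4) - f 3 := by
    intro m
    induction m with
    | zero => simp
    | succ k ih =>
      have h4 : (4 : ℕ) ≤ k + 4 + 1 := by omega
      rw [show k + 1 + 4 = (k + 4) + 1 by omega, Finset.sum_Icc_succ_top h4, ih,
        show k + 4 + 1 - 1 = k + 4 by omega]
      ring
  have hsum : f n - f 3 ≤ ∑ i ∈ Finset.Icc 4 n, condI (A 2) (A (i - 1)) (A i) := by
    have hmono : ∑ i ∈ Finset.Icc 4 n, (f i - f (i - 1)) ≤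
        ∑ i ∈ Finset.Icc 4 n, condI (A 2) (A (i - 1)) (A i) := by
      apply Finset.sum_le_sum
      intro i _
      exact key_cond hZ2 (A (i - 1)) (A i)
    have := tel (n - 4)
    rw [show n - 4 + 4 = n by omega] at this
    linarith
  have hf3 : f 3 = 0 := by
    simp only [hf, condH]
    rw [sup_eq_right.mpr hZ3, sub_self]
  have h2 : (finrank F ↑Z : ℤ) - f 1 ≤ mutI (A 1) (A 2) := key_mut hZ2 (A 1)
  have h3 : f 1 - f n ≤ condI (A 3) (A n) (A 1) := key_cond hZ3 (A n) (A 1)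
  have h0 : mutI (A 2) (A 3) = (finrank F ↑Z : ℤ) := by
    have := Submodule.finrank_sup_add_finrank_inf_eq (A 2) (A 3)
    unfold mutI
    rw [hZdef]
    omega
  linarith
end

section
/- For subspaces A, B, C, D, E, F of a finite-dimensional vector space V, I(A;B) ≤ I(A;C) + I(B;D|C) + I(A;E|D) + I(B;F|E) + I(A;B|F), where I(X;Y) = dim X + dim Y - dim(X+Y) and I(X;Y|T) = dim(X+T) + dim(Y+T) - dim(X+Y+T) - dim T. -/
open Module

private lemma sm {F V : Type*} [Field F] [AddCommGroup V] [Module F V] [FiniteDimensional F V]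
    (U W X S : Submodule F V) (hS : U ⊔ W = S) (h1 : X ≤ U) (h2 : X ≤ W) :
    finrank F ↑S + finrank F ↑X ≤ finrank F ↑U + finrank F ↑W := by
  have e := Submodule.finrank_sup_add_finrank_inf_eq U W
  have m : finrank F ↑X ≤ finrank F ↑(U ⊓ W) := Submodule.finrank_mono (le_inf h1 h2)
  rw [hS] at e
  omega

theorem stmt15 {F V : Type*} [Field F] [AddCommGroup V] [Module F V] [FiniteDimensional F V]
    (A B C D E G : Submodule F V) :
    mutI A B ≤ mutI A C + condI B D C + condI A E D + condI B G E + condI A B G := by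
  set Z := A ⊓ B with hZ
  have hZA : Z ≤ A := inf_le_left
  have hZB : Z ≤ B := inf_le_right
  have hmod : finrank F ↑(A ⊔ B) + finrank F ↑Z = finrank F ↑A + finrank F ↑B :=
    Submodule.finrank_sup_add_finrank_inf_eq A B
  -- I1 : d(A⊔C) + dZ ≤ dA + d(Z⊔C)
  have I1 : finrank F ↑(A ⊔ C) + finrank F ↑Z ≤ finrank F ↑A + finrank F ↑(Z ⊔ C) :=
    sm A (Z ⊔ C) Z (A ⊔ C)
      (by rw [← sup_assoc, sup_eq_left.mpr hZA]) hZA le_sup_left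
  -- S1 : d(B⊔D⊔C) + d(Z⊔C) ≤ d(B⊔C) + d(Z⊔D⊔C)
  have S1 : finrank F ↑(B ⊔ D ⊔ C) + finrank F ↑(Z ⊔ C)
      ≤ finrank F ↑(B ⊔ C) + finrank F ↑(Z ⊔ D ⊔ C) :=
    sm (B ⊔ C) (Z ⊔ D ⊔ C) (Z ⊔ C) (B ⊔ D ⊔ C)
      (by rw [sup_assoc Z D C, ← sup_assoc (B ⊔ C) Z (D ⊔ C), sup_right_comm B C Z,
            sup_eq_left.mpr hZB, sup_sup_sup_comm B C D C, sup_idem])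
      (sup_le_sup_right hZB C) (sup_le_sup_right le_sup_left C)
  -- S2 : d(Z⊔D⊔C) + dD ≤ d(D⊔C) + d(Z⊔D)
  have S2 : finrank F ↑(Z ⊔ D ⊔ C) + finrank F ↑D
      ≤ finrank F ↑(D ⊔ C) + finrank F ↑(Z ⊔ D) :=
    sm (D ⊔ C) (Z ⊔ D) D (Z ⊔ D ⊔ C)
      (by rw [sup_comm (D ⊔ C) (Z ⊔ D), ← sup_assoc (Z ⊔ D) D C, sup_assoc Z D D,
            sup_idem]) le_sup_left le_sup_right
  -- S3 : d(A⊔E⊔D) + d(Z⊔D) ≤ d(A⊔D) + d(Z⊔E⊔D)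
  have S3 : finrank F ↑(A ⊔ E ⊔ D) + finrank F ↑(Z ⊔ D)
      ≤ finrank F ↑(A ⊔ D) + finrank F ↑(Z ⊔ E ⊔ D) :=
    sm (A ⊔ D) (Z ⊔ E ⊔ D) (Z ⊔ D) (A ⊔ E ⊔ D)
      (by rw [sup_assoc Z E D, ← sup_assoc (A ⊔ D) Z (E ⊔ D), sup_right_comm A D Z,
            sup_eq_left.mpr hZA, sup_sup_sup_comm A D E D, sup_idem])
      (sup_le_sup_right hZA D) (sup_le_sup_right le_sup_left D)
  -- S4 : d(Z⊔E⊔D) + dE ≤ d(E⊔D) + d(Z⊔E)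
  have S4 : finrank F ↑(Z ⊔ E ⊔ D) + finrank F ↑E
      ≤ finrank F ↑(E ⊔ D) + finrank F ↑(Z ⊔ E) :=
    sm (E ⊔ D) (Z ⊔ E) E (Z ⊔ E ⊔ D)
      (by rw [sup_comm (E ⊔ D) (Z ⊔ E), ← sup_assoc (Z ⊔ E) E D, sup_assoc Z E E,
            sup_idem]) le_sup_left le_sup_right
  -- S5 : d(B⊔G⊔E) + d(Z⊔E) ≤ d(B⊔E) + d(Z⊔G⊔E)
  have S5 : finrank F ↑(B ⊔ G ⊔ E) + finrank F ↑(Z ⊔ E)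
      ≤ finrank F ↑(B ⊔ E) + finrank F ↑(Z ⊔ G ⊔ E) :=
    sm (B ⊔ E) (Z ⊔ G ⊔ E) (Z ⊔ E) (B ⊔ G ⊔ E)
      (by rw [sup_assoc Z G E, ← sup_assoc (B ⊔ E) Z (G ⊔ E), sup_right_comm B E Z,
            sup_eq_left.mpr hZB, sup_sup_sup_comm B E G E, sup_idem])
      (sup_le_sup_right hZB E) (sup_le_sup_right le_sup_left E)
  -- S6 : d(Z⊔G⊔E) + dG ≤ d(G⊔E) + d(Z⊔G)
  have S6 : finrank F ↑(Z ⊔ G ⊔ E) + finrank F ↑G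
      ≤ finrank F ↑(G ⊔ E) + finrank F ↑(Z ⊔ G) :=
    sm (G ⊔ E) (Z ⊔ G) G (Z ⊔ G ⊔ E)
      (by rw [sup_comm (G ⊔ E) (Z ⊔ G), ← sup_assoc (Z ⊔ G) G E, sup_assoc Z G G,
            sup_idem]) le_sup_left le_sup_right
  -- S7 : d(A⊔B⊔G) + d(Z⊔G) ≤ d(A⊔G) + d(B⊔G)
  have S7 : finrank F ↑(A ⊔ B ⊔ G) + finrank F ↑(Z ⊔ G)
      ≤ finrank F ↑(A ⊔ G) + finrank F ↑(B ⊔ G) :=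
    sm (A ⊔ G) (B ⊔ G) (Z ⊔ G) (A ⊔ B ⊔ G)
      (by rw [sup_sup_sup_comm A G B G, sup_idem]) (sup_le_sup_right hZA G) (sup_le_sup_right hZB G)
  simp only [mutI, condI]
  zify at hmod I1 S1 S2 S3 S4 S5 S6 S7
  linarith
end

section
/- For subspaces R, S, T of a finite-dimensional vector space V, if dim(R ∩ T) = dim(S ∩ T), dim(R ∩ T) = dim((R+S) ∩ T), and dim(R ∩ T) = dim(R ∩ S), then R ∩ S ⊆ T. -/
open Module

theorem stmt18 {F V : Type*} [Field F] [AddCommGroup V] [Module F V] [FiniteDimensional F V]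
    (R S T : Submodule F V)
    (h1 : finrank F ↑(R ⊓ T) = finrank F ↑(S ⊓ T))
    (h2 : finrank F ↑(R ⊓ T) = finrank F ↑((R ⊔ S) ⊓ T))
    (h3 : finrank F ↑(R ⊓ T) = finrank F ↑(R ⊓ S)) :
    R ⊓ S ≤ T := by
  set A := R ⊓ T
  set B := S ⊓ T
  have hAB_sup : A ⊔ B ≤ (R ⊔ S) ⊓ T := by
    apply sup_le
    · exact inf_le_inf_right T le_sup_left
    · exact inf_le_inf_right T le_sup_right
  have hdim : finrank F ↑(A ⊔ B) + finrank F ↑(A ⊓ B) =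
      finrank F ↑A + finrank F ↑B :=
    Submodule.finrank_sup_add_finrank_inf_eq A B
  have hsup_le : finrank F ↑(A ⊔ B) ≤ finrank F ↑((R ⊔ S) ⊓ T) :=
    Submodule.finrank_mono hAB_sup
  have hge : finrank F ↑(R ⊓ S) ≤ finrank F ↑(A ⊓ B) := by omega
  have hABeq : A ⊓ B = R ⊓ S ⊓ T := by
    simp only [A, B]
    rw [inf_inf_distrib_right]
    ac_rfl
  have hle : R ⊓ S ⊓ T ≤ R ⊓ S := inf_le_left
  have heq : R ⊓ S ⊓ T = R ⊓ S := by
    apply Submodule.eq_of_le_of_finrank_le hle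
    rw [← hABeq]; exact hge
  calc R ⊓ S = R ⊓ S ⊓ T := heq.symm
    _ ≤ T := inf_le_right
end
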